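/- For T ∈ L_{d+k+1,d} with T ≠ ∅ (as a collection), the order ideal I_{d+k+1,d}(T) is order-isomorphic to the direct product Π_{T_i ∈ T} I_{d+k+1,d}({T_i}), and hence to Π_{T_i ∈ T} L_{k+codim_d(T_i), codim_d(T_i)−1}. -/

import Mathlib

/-- `D_d({T_1,…,T_l}) = codim_d(⋂ᵢ Tᵢ) - Σᵢ codim_d(Tᵢ)` where `codim_d(X) = d+1-|X|`. -/
def DL {α : Type*} [DecidableEq α] [Fintype α] (d : ℕ) (T : Finset (Finset α)) : ℤ :=
  (((d : ℤ) + 1) - (T.inf id).card) - ∑ X ∈ T, (((d : ℤ) + 1) - X.card)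

/-- The rank function `ρ_d(T) = Σ_{X ∈ T} (d+1-|X|)`. -/
def rhoL {α : Type*} (d : ℕ) (T : Finset (Finset α)) : ℤ :=
  ∑ X ∈ T, (((d : ℤ) + 1) - X.card)

/-- The set `L_{n,d}` of collections `T ⊆ 2^{[n]}` with `0 ≤ |Tᵢ| ≤ d` and
`D_d(T') > 0` for all subcollections of size `> 1`. -/
def LLower (n d : ℕ) : Set (Finset (Finset (Fin n))) :=
  {T | (∀ X ∈ T, X.card ≤ d) ∧ ∀ T' ⊆ T, 1 < T'.card → 0 < DL d T'}

/-- The order on `L_{n,d}`: `T ≤ T'` iff `T = T'`, or `ρ_d(T) < ρ_d(T')` and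
every member of `T` contains some member of `T'`. -/
def leLow {α : Type*} (d : ℕ) (T T' : Finset (Finset α)) : Prop :=
  T = T' ∨ (rhoL d T < rhoL d T' ∧ ∀ X ∈ T, ∃ Y ∈ T', Y ⊆ X)

instance (n d : ℕ) : LE ↥(LLower n d) := ⟨fun A B => leLow d A.1 B.1⟩

/-- The order ideal of `L_{n,d}` generated by a collection `T₀`. -/
def IdealSub (n d : ℕ) (T0 : Finset (Finset (Fin n))) :=
  {T // T ∈ LLower n d ∧ leLow d T T0}

instance (n d : ℕ) (T0 : Finset (Finset (Fin n))) : LE (IdealSub n d T0) :=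
  ⟨fun A B => leLow d A.1 B.1⟩


open Finset

variable {α : Type*} [DecidableEq α] [Fintype α]

/-- `LLower`-style condition over a general fintype. -/
def Lc (d : ℕ) (A : Finset (Finset α)) : Prop :=
  (∀ X ∈ A, X.card ≤ d) ∧ ∀ T' ⊆ A, 1 < T'.card → 0 < DL d T'

def Cov (A B : Finset (Finset α)) : Prop := ∀ X ∈ A, ∃ Y ∈ B, Y ⊆ X

lemma Lc.mono {d : ℕ} {A B : Finset (Finset α)} (hA : Lc d A) (h : B ⊆ A) : Lc d B :=
  ⟨fun X hX => hA.1 X (h hX), fun T' hT' => hA.2 T' (hT'.trans h)⟩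

lemma mem_inf_iff {s : Finset (Finset α)} {f : Finset α → Finset α} {x : α} :
    x ∈ s.inf f ↔ ∀ Y ∈ s, x ∈ f Y := by
  induction s using Finset.induction with
  | empty => simp [Finset.inf_empty]
  | insert _ _ _ ih => simp [Finset.inf_insert, Finset.mem_inter, ih]

lemma pair_not_subset {d : ℕ} {B : Finset (Finset α)} (hB : Lc d B)
    {Y Y' X : Finset α} (hY : Y ∈ B) (hY' : Y' ∈ B) (hne : Y ≠ Y')
    (hX : X.card ≤ d) (h1 : Y ⊆ X) (h2 : Y' ⊆ X) : False := by
  have hsub : ({Y, Y'} : Finset (Finset α)) ⊆ B := by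
    intro Z hZ; rcases Finset.mem_insert.1 hZ with rfl | hZ
    · exact hY
    · rw [Finset.mem_singleton.1 hZ]; exact hY'
  have hcard : ({Y, Y'} : Finset (Finset α)).card = 2 := Finset.card_pair hne
  have hD := hB.2 _ hsub (by omega)
  have hinf : ({Y, Y'} : Finset (Finset α)).inf id = Y ∩ Y' := by
    rw [Finset.inf_insert, Finset.inf_singleton]; rfl
  rw [DL, hinf, Finset.sum_pair hne] at hD
  have hu : (Y ∪ Y').card + (Y ∩ Y').card = Y.card + Y'.card :=
    Finset.card_union_add_card_inter Y Y'
  have hle : (Y ∪ Y').card ≤ X.card := Finset.card_le_card (Finset.union_subset h1 h2)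
  have := Y.card; push_cast at hD
  omega

lemma rho_filter_le {d : ℕ} {A : Finset (Finset α)} (hA : Lc d A)
    {Y : Finset α} (hY : Y.card ≤ d) :
    rhoL d (A.filter (Y ⊆ ·)) ≤ ((d : ℤ) + 1) - Y.card ∧
      (rhoL d (A.filter (Y ⊆ ·)) = ((d : ℤ) + 1) - Y.card → A.filter (Y ⊆ ·) = {Y}) := by
  set F := A.filter (Y ⊆ ·) with hF
  rcases Nat.lt_or_ge F.card 2 with hc | hc
  · interval_cases h : F.card
    · have : F = ∅ := Finset.card_eq_zero.1 h
      rw [this]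
      constructor
      · rw [rhoL, Finset.sum_empty]; push_cast; omega
      · intro habs; rw [rhoL, Finset.sum_empty] at habs
        exfalso; push_cast at habs; omega
    · obtain ⟨X, hX⟩ := Finset.card_eq_one.1 h
      have hXA : X ∈ F := by rw [hX]; exact Finset.mem_singleton_self X
      have hYX : Y ⊆ X := (Finset.mem_filter.1 hXA).2
      have hXcard : Y.card ≤ X.card := Finset.card_le_card hYX
      rw [hX, rhoL, Finset.sum_singleton]
      constructor
      · push_cast; omega
      · intro habs
        have : X.card = Y.card := by push_cast at habs; omega
        have : X = Y := (Finset.eq_of_subset_of_card_le hYX (le_of_eq this)).symm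
        rw [this]
  · have hD := hA.2 F (Finset.filter_subset _ _) (by omega)
    have hYinf : Y ⊆ F.inf id := by
      intro x hx
      rw [mem_inf_iff]
      intro Z hZ
      exact (Finset.mem_filter.1 hZ).2 hx
    have hinfcard : Y.card ≤ (F.inf id).card := Finset.card_le_card hYinf
    rw [DL] at hD
    have : rhoL d F < ((d:ℤ)+1) - Y.card := by rw [rhoL]; push_cast at hD ⊢; omega
    exact ⟨le_of_lt this, fun h => absurd h (ne_of_lt this)⟩

lemma rho_le_of_cov {d : ℕ} {A B : Finset (Finset α)} (hA : Lc d A) (hB : Lc d B)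
    (hcov : Cov A B) :
    rhoL d A ≤ rhoL d B ∧ (rhoL d A = rhoL d B → A = B) := by
  have hdisj : (↑B : Set (Finset α)).PairwiseDisjoint (fun Y => A.filter (Y ⊆ ·)) := by
    intro Y hY Y' hY' hne
    apply Finset.disjoint_left.2
    intro X hX hX'
    exact pair_not_subset hB hY hY' hne (hA.1 X (Finset.mem_filter.1 hX).1)
      (Finset.mem_filter.1 hX).2 (Finset.mem_filter.1 hX').2
  have hAeq : A = B.biUnion (fun Y => A.filter (Y ⊆ ·)) := by
    ext X
    simp only [Finset.mem_biUnion, Finset.mem_filter]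
    constructor
    · intro hX; obtain ⟨Y, hY, hYX⟩ := hcov X hX; exact ⟨Y, hY, hX, hYX⟩
    · rintro ⟨Y, hY, hX, -⟩; exact hX
  have hsum : rhoL d A = ∑ Y ∈ B, rhoL d (A.filter (Y ⊆ ·)) := by
    conv_lhs => rw [hAeq]
    exact Finset.sum_biUnion hdisj
  have hterm : ∀ Y ∈ B, rhoL d (A.filter (Y ⊆ ·)) ≤ ((d:ℤ)+1) - Y.card :=
    fun Y hY => (rho_filter_le hA (hB.1 Y hY)).1
  constructor
  · rw [hsum, rhoL]; exact Finset.sum_le_sum hterm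
  · intro heq
    rw [hsum] at heq
    rw [rhoL] at heq
    have hall := (Finset.sum_eq_sum_iff_of_le hterm).1 heq
    have : ∀ Y ∈ B, A.filter (Y ⊆ ·) = {Y} :=
      fun Y hY => (rho_filter_le hA (hB.1 Y hY)).2 (hall Y hY)
    rw [hAeq, Finset.biUnion_congr rfl this, Finset.biUnion_singleton_eq_self]

lemma leLow_iff_cov {d : ℕ} {A B : Finset (Finset α)} (hA : Lc d A) (hB : Lc d B) :
    leLow d A B ↔ Cov A B := by
  constructor
  · rintro (rfl | ⟨-, h⟩)
    · exact fun X hX => ⟨X, hX, Finset.Subset.refl X⟩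
    · exact h
  · intro hcov
    by_cases h : A = B
    · exact Or.inl h
    · refine Or.inr ⟨?_, hcov⟩
      obtain ⟨hle, heq⟩ := rho_le_of_cov hA hB hcov
      exact lt_of_le_of_ne hle (fun e => h (heq e))

lemma Lc.singleton {d : ℕ} {Y : Finset α} (hY : Y.card ≤ d) : Lc d ({Y} : Finset (Finset α)) := by
  refine ⟨fun X hX => by rw [Finset.mem_singleton.1 hX]; exact hY, fun T' hT' hc => ?_⟩
  have := Finset.card_le_card hT'
  simp at this; omega

section Prod

variable {n d : ℕ} {T : Finset (Finset (Fin n))}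

lemma index_unique (hT : T ∈ LLower n d) {X Ti Tj : Finset (Fin n)}
    (hX : X.card ≤ d) (hi : Ti ∈ T) (hj : Tj ∈ T) (h1 : Ti ⊆ X) (h2 : Tj ⊆ X) :
    Ti = Tj := by
  by_contra h
  exact pair_not_subset hT hi hj h hX h1 h2

/-- members of an element of the ideal of `{Y}` all contain `Y`. -/
lemma mem_superset (hT : T ∈ LLower n d) {i : ↥T} {f : IdealSub n d {i.1}}
    {X : Finset (Fin n)} (hX : X ∈ f.1) : i.1 ⊆ X := by
  have hsing : Lc d ({i.1} : Finset (Finset (Fin n))) := Lc.singleton (hT.1 i.1 i.2)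
  have := (leLow_iff_cov f.2.1 hsing).1 f.2.2 X hX
  obtain ⟨Y, hY, hYX⟩ := this
  rwa [Finset.mem_singleton.1 hY] at hYX

lemma comp_mem (hT : T ∈ LLower n d) {S : Finset (Finset (Fin n))}
    (hS : S ∈ LLower n d ∧ leLow d S T) (i : ↥T) :
    (S.filter (i.1 ⊆ ·)) ∈ LLower n d ∧ leLow d (S.filter (i.1 ⊆ ·)) {i.1} := by
  have hL : Lc d (S.filter (i.1 ⊆ ·)) := Lc.mono hS.1 (Finset.filter_subset _ _)
  refine ⟨hL, (leLow_iff_cov hL (Lc.singleton (hT.1 i.1 i.2))).2 ?_⟩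
  intro X hX
  exact ⟨i.1, Finset.mem_singleton_self _, (Finset.mem_filter.1 hX).2⟩

lemma union_mem (hT : T ∈ LLower n d) (f : ∀ i : ↥T, IdealSub n d {i.1}) :
    (T.attach.biUnion fun i => (f i).1) ∈ LLower n d ∧
      leLow d (T.attach.biUnion fun i => (f i).1) T := by
  have hmemU : ∀ X ∈ (T.attach.biUnion fun i => (f i).1), ∃ i : ↥T, X ∈ (f i).1 := by
    intro X hX
    obtain ⟨i, -, hXi⟩ := Finset.mem_biUnion.1 hX
    exact ⟨i, hXi⟩
  have hcards : ∀ X ∈ (T.attach.biUnion fun i => (f i).1), X.card ≤ d := by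
    intro X hX; obtain ⟨i, hXi⟩ := hmemU X hX; exact (f i).2.1.1 X hXi
  have hfil : ∀ (S' : Finset (Finset (Fin n))), S' ⊆ (T.attach.biUnion fun i => (f i).1) →
      ∀ i : ↥T, S'.filter (i.1 ⊆ ·) ⊆ (f i).1 := by
    intro S' hS' i X hX
    obtain ⟨hXS, hiX⟩ := Finset.mem_filter.1 hX
    obtain ⟨j, hXj⟩ := hmemU X (hS' hXS)
    have hjX : j.1 ⊆ X := mem_superset hT hXj
    have : j.1 = i.1 := index_unique hT (hcards X (hS' hXS)) j.2 i.2 hjX hiX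
    have hji : j = i := Subtype.ext this
    rwa [hji] at hXj
  have hLc : Lc d (T.attach.biUnion fun i => (f i).1) := by
    refine ⟨hcards, ?_⟩
    intro S' hS' hc
    have hcover : ∀ X ∈ S', ∃ Y ∈ T.filter (fun Y => (S'.filter (Y ⊆ ·)).Nonempty), Y ⊆ X := by
      intro X hX
      obtain ⟨j, hXj⟩ := hmemU X (hS' hX)
      have hjX : j.1 ⊆ X := mem_superset hT hXj
      exact ⟨j.1, Finset.mem_filter.2 ⟨j.2, ⟨X, Finset.mem_filter.2 ⟨hX, hjX⟩⟩⟩, hjX⟩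
    have hIT : T.filter (fun Y => (S'.filter (Y ⊆ ·)).Nonempty) ⊆ T := Finset.filter_subset _ _
    have hsplit : S' = (T.filter (fun Y => (S'.filter (Y ⊆ ·)).Nonempty)).biUnion
        (fun Y => S'.filter (Y ⊆ ·)) := by
      ext X
      simp only [Finset.mem_biUnion, Finset.mem_filter]
      constructor
      · intro hX
        obtain ⟨Y, hY, hYX⟩ := hcover X hX
        exact ⟨Y, Finset.mem_filter.1 hY, hX, hYX⟩
      · rintro ⟨Y, -, hX, -⟩; exact hX
    have hdisj : (↑(T.filter (fun Y => (S'.filter (Y ⊆ ·)).Nonempty)) :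
        Set (Finset (Fin n))).PairwiseDisjoint (fun Y => S'.filter (Y ⊆ ·)) := by
      intro Y hY Y' hY' hne
      apply Finset.disjoint_left.2
      intro X hX hX'
      exact pair_not_subset hT (hIT (by exact_mod_cast hY)) (hIT (by exact_mod_cast hY'))
        hne (hcards X (hS' (Finset.mem_filter.1 hX).1))
        (Finset.mem_filter.1 hX).2 (Finset.mem_filter.1 hX').2
    obtain hIc | hIc : (T.filter (fun Y => (S'.filter (Y ⊆ ·)).Nonempty)).card < 2 ∨
        (T.filter (fun Y => (S'.filter (Y ⊆ ·)).Nonempty)).card ≥ 2 := Nat.lt_or_ge _ _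
    · -- one index: S' is contained in a single (f i).1
      have hIne : (T.filter (fun Y => (S'.filter (Y ⊆ ·)).Nonempty)).Nonempty := by
        obtain ⟨X, hX⟩ := Finset.card_pos.1 (by omega : 0 < S'.card)
        obtain ⟨Y, hY, -⟩ := hcover X hX
        exact ⟨Y, hY⟩
      obtain ⟨Y, hY⟩ := hIne
      have hYT : Y ∈ T := hIT hY
      have hsub : S' ⊆ (f ⟨Y, hYT⟩).1 := by
        intro X hX
        refine hfil S' hS' ⟨Y, hYT⟩ (Finset.mem_filter.2 ⟨hX, ?_⟩)
        obtain ⟨Y', hY', hYX⟩ := hcover X hX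
        have : Y' = Y := by
          by_contra hne
          have := Finset.one_lt_card.2 ⟨Y', hY', Y, hY, hne⟩
          omega
        rwa [this] at hYX
      exact (f ⟨Y, hYT⟩).2.1.2 S' hsub hc
    · -- at least two indices: the counting argument
      have hYZ : ∀ Y ∈ T.filter (fun Y => (S'.filter (Y ⊆ ·)).Nonempty),
          Y ⊆ (S'.filter (Y ⊆ ·)).inf id := by
        intro Y hY x hx
        rw [mem_inf_iff]
        intro W hW
        exact (Finset.mem_filter.1 hW).2 hx
      have hsum : rhoL d S' = ∑ Y ∈ T.filter (fun Y => (S'.filter (Y ⊆ ·)).Nonempty),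
          rhoL d (S'.filter (Y ⊆ ·)) := by
        conv_lhs => rw [rhoL, hsplit]
        exact Finset.sum_biUnion hdisj
      have hterm : ∀ Y ∈ T.filter (fun Y => (S'.filter (Y ⊆ ·)).Nonempty),
          rhoL d (S'.filter (Y ⊆ ·)) ≤ ((d : ℤ) + 1) - ((S'.filter (Y ⊆ ·)).inf id).card := by
        intro Y hY
        have hne : (S'.filter (Y ⊆ ·)).Nonempty := (Finset.mem_filter.1 hY).2
        rcases Nat.lt_or_ge (S'.filter (Y ⊆ ·)).card 2 with h1 | h2
        · have hcd : (S'.filter (Y ⊆ ·)).card = 1 := by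
            have := Finset.card_pos.2 hne; omega
          obtain ⟨X, hX⟩ := Finset.card_eq_one.1 hcd
          rw [hX]
          simp [rhoL, Finset.inf_singleton]
        · have hYT : Y ∈ T := hIT hY
          have hD := (f ⟨Y, hYT⟩).2.1.2 _ (hfil S' hS' ⟨Y, hYT⟩) h2
          rw [DL] at hD
          rw [rhoL]
          linarith
      have hinfU : S'.inf id = (T.filter (fun Y => (S'.filter (Y ⊆ ·)).Nonempty)).inf
          (fun Y => (S'.filter (Y ⊆ ·)).inf id) := by
        conv_lhs => rw [hsplit]
        exact Finset.inf_biUnion _ _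
      have hsubun : (T.filter (fun Y => (S'.filter (Y ⊆ ·)).Nonempty)).inf
            (fun Y => (S'.filter (Y ⊆ ·)).inf id)
          ⊆ ((T.filter (fun Y => (S'.filter (Y ⊆ ·)).Nonempty)).inf id)
            ∪ (T.filter (fun Y => (S'.filter (Y ⊆ ·)).Nonempty)).biUnion
              (fun Y => (S'.filter (Y ⊆ ·)).inf id \ Y) := by
        intro x hx
        by_cases hxi : x ∈ (T.filter (fun Y => (S'.filter (Y ⊆ ·)).Nonempty)).inf id
        · exact Finset.mem_union_left _ hxi
        · apply Finset.mem_union_right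
          rw [mem_inf_iff] at hxi
          push_neg at hxi
          obtain ⟨Y, hY, hxY⟩ := hxi
          refine Finset.mem_biUnion.2 ⟨Y, hY, Finset.mem_sdiff.2 ⟨?_, hxY⟩⟩
          exact mem_inf_iff.1 hx Y hY
      have hcard7 : ((T.filter (fun Y => (S'.filter (Y ⊆ ·)).Nonempty)).inf
              (fun Y => (S'.filter (Y ⊆ ·)).inf id)).card
            + ∑ Y ∈ T.filter (fun Y => (S'.filter (Y ⊆ ·)).Nonempty), Y.card
          ≤ ((T.filter (fun Y => (S'.filter (Y ⊆ ·)).Nonempty)).inf id).card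
            + ∑ Y ∈ T.filter (fun Y => (S'.filter (Y ⊆ ·)).Nonempty),
                ((S'.filter (Y ⊆ ·)).inf id).card := by
        have h1 := le_trans (Finset.card_le_card hsubun)
            (le_trans (Finset.card_union_le _ _)
              (Nat.add_le_add_left Finset.card_biUnion_le _))
        have h2 : ∑ Y ∈ T.filter (fun Y => (S'.filter (Y ⊆ ·)).Nonempty),
              ((S'.filter (Y ⊆ ·)).inf id \ Y).card
            + ∑ Y ∈ T.filter (fun Y => (S'.filter (Y ⊆ ·)).Nonempty), Y.card
            = ∑ Y ∈ T.filter (fun Y => (S'.filter (Y ⊆ ·)).Nonempty),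
              ((S'.filter (Y ⊆ ·)).inf id).card := by
          rw [← Finset.sum_add_distrib]
          exact Finset.sum_congr rfl fun Y hY => Finset.card_sdiff_add_card_eq_card (hYZ Y hY)
        omega
      have hDI := hT.2 _ hIT hIc
      rw [DL] at hDI
      rw [DL, hinfU]
      rw [show (∑ X ∈ S', (((d:ℤ)+1) - (X.card : ℤ))) = rhoL d S' from rfl, hsum]
      have h4 := Finset.sum_le_sum hterm
      have hs1 : ∑ Y ∈ T.filter (fun Y => (S'.filter (Y ⊆ ·)).Nonempty),
            (((d:ℤ)+1) - (Y.card : ℤ))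
          - ∑ Y ∈ T.filter (fun Y => (S'.filter (Y ⊆ ·)).Nonempty),
            (((d:ℤ)+1) - (((S'.filter (Y ⊆ ·)).inf id).card : ℤ))
          = ∑ Y ∈ T.filter (fun Y => (S'.filter (Y ⊆ ·)).Nonempty),
              ((((S'.filter (Y ⊆ ·)).inf id).card : ℤ))
            - ∑ Y ∈ T.filter (fun Y => (S'.filter (Y ⊆ ·)).Nonempty), (Y.card : ℤ) := by
        rw [← Finset.sum_sub_distrib, ← Finset.sum_sub_distrib]
        apply Finset.sum_congr rfl
        intro Y hY; ring
      have hc7 : (((T.filter (fun Y => (S'.filter (Y ⊆ ·)).Nonempty)).inf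
              (fun Y => (S'.filter (Y ⊆ ·)).inf id)).card : ℤ)
            + ∑ Y ∈ T.filter (fun Y => (S'.filter (Y ⊆ ·)).Nonempty), (Y.card : ℤ)
          ≤ (((T.filter (fun Y => (S'.filter (Y ⊆ ·)).Nonempty)).inf id).card : ℤ)
            + ∑ Y ∈ T.filter (fun Y => (S'.filter (Y ⊆ ·)).Nonempty),
                (((S'.filter (Y ⊆ ·)).inf id).card : ℤ) := by
        exact_mod_cast hcard7
      linarith
  refine ⟨hLc, (leLow_iff_cov hLc hT).2 ?_⟩
  intro X hX
  obtain ⟨i, hXi⟩ := hmemU X hX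
  exact ⟨i.1, i.2, mem_superset hT hXi⟩

end Prod

noncomputable def isoProd (n d : ℕ) (T : Finset (Finset (Fin n))) (hT : T ∈ LLower n d) :
    IdealSub n d T ≃o ((Ti : ↥T) → IdealSub n d {Ti.1}) where
  toFun S := fun i => ⟨S.1.filter (i.1 ⊆ ·), comp_mem hT S.2 i⟩
  invFun f := ⟨T.attach.biUnion fun i => (f i).1, union_mem hT f⟩
  left_inv S := by
    apply Subtype.ext
    ext X
    simp only [Finset.mem_biUnion, Finset.mem_filter, Finset.mem_attach, true_and]
    constructor
    · rintro ⟨i, hX, -⟩; exact hX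
    · intro hX
      obtain ⟨Y, hY, hYX⟩ := (leLow_iff_cov S.2.1 hT).1 S.2.2 X hX
      exact ⟨⟨Y, hY⟩, hX, hYX⟩
  right_inv f := by
    funext i
    apply Subtype.ext
    ext X
    simp only [Finset.mem_filter, Finset.mem_biUnion, Finset.mem_attach, true_and]
    constructor
    · rintro ⟨⟨j, hXj⟩, hiX⟩
      have hjX : j.1 ⊆ X := mem_superset hT hXj
      have : j = i := Subtype.ext (index_unique hT ((f j).2.1.1 X hXj) j.2 i.2 hjX hiX)
      rwa [this] at hXj
    · intro hX
      exact ⟨⟨i, hX⟩, mem_superset hT hX⟩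
  map_rel_iff' := by
    intro S S'
    constructor
    · intro h
      show leLow d S.1 S'.1
      apply (leLow_iff_cov S.2.1 S'.2.1).2
      intro X hX
      obtain ⟨Y, hY, hYX⟩ := (leLow_iff_cov S.2.1 hT).1 S.2.2 X hX
      have hXi : X ∈ S.1.filter ((⟨Y, hY⟩ : ↥T).1 ⊆ ·) := Finset.mem_filter.2 ⟨hX, hYX⟩
      have hcomp : leLow d (S.1.filter ((⟨Y, hY⟩ : ↥T).1 ⊆ ·))
          (S'.1.filter ((⟨Y, hY⟩ : ↥T).1 ⊆ ·)) := h ⟨Y, hY⟩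
      have hcov := (leLow_iff_cov (comp_mem hT S.2 ⟨Y, hY⟩).1
        (comp_mem hT S'.2 ⟨Y, hY⟩).1).1 hcomp
      obtain ⟨W, hW, hWX⟩ := hcov X hXi
      exact ⟨W, (Finset.mem_filter.1 hW).1, hWX⟩
    · intro h i
      show leLow d (S.1.filter (i.1 ⊆ ·)) (S'.1.filter (i.1 ⊆ ·))
      apply (leLow_iff_cov (comp_mem hT S.2 i).1 (comp_mem hT S'.2 i).1).2
      intro X hX
      obtain ⟨hXS, hiX⟩ := Finset.mem_filter.1 hX
      obtain ⟨W, hW, hWX⟩ := (leLow_iff_cov S.2.1 S'.2.1).1 h X hXS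
      obtain ⟨Z, hZT, hZW⟩ := (leLow_iff_cov S'.2.1 hT).1 S'.2.2 W hW
      have hZi : Z = i.1 := index_unique hT (S.2.1.1 X hXS) hZT i.2 (hZW.trans hWX) hiX
      exact ⟨W, Finset.mem_filter.2 ⟨hW, hZi ▸ hZW⟩, hWX⟩

section Factor

variable {n d : ℕ}

/-- The chosen equivalence between the complement of `Y` and `Fin (n - #Y)`. -/
noncomputable def eY (n : ℕ) (Y : Finset (Fin n)) : {x // x ∈ Yᶜ} ≃ Fin (n - Y.card) :=
  (Finset.equivFin Yᶜ).trans (finCongr (by rw [Finset.card_compl]; simp))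

/-- Delete `Y` and relabel. -/
noncomputable def gY (n : ℕ) (Y : Finset (Fin n)) (X : Finset (Fin n)) :
    Finset (Fin (n - Y.card)) :=
  Finset.univ.filter (fun a => ((eY n Y).symm a).1 ∈ X)

/-- Add `Y` back and relabel. -/
noncomputable def hY (n : ℕ) (Y : Finset (Fin n)) (Z : Finset (Fin (n - Y.card))) :
    Finset (Fin n) :=
  Y ∪ Z.image (fun a => ((eY n Y).symm a).1)

variable {Y : Finset (Fin n)}

lemma mem_gY {X : Finset (Fin n)} {a : Fin (n - Y.card)} :
    a ∈ gY n Y X ↔ ((eY n Y).symm a).1 ∈ X := by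
  simp [gY]

lemma esymm_inj : Function.Injective (fun a : Fin (n - Y.card) => ((eY n Y).symm a).1) :=
  Subtype.val_injective.comp (eY n Y).symm.injective

lemma esymm_not_mem (a : Fin (n - Y.card)) : ((eY n Y).symm a).1 ∉ Y := by
  have := ((eY n Y).symm a).2
  rwa [Finset.mem_compl] at this

lemma mem_hY {Z : Finset (Fin (n - Y.card))} {x : Fin n} :
    x ∈ hY n Y Z ↔ x ∈ Y ∨ ∃ a ∈ Z, ((eY n Y).symm a).1 = x := by
  simp [hY]

lemma gY_hY (Z : Finset (Fin (n - Y.card))) : gY n Y (hY n Y Z) = Z := by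
  ext a
  rw [mem_gY, mem_hY]
  constructor
  · rintro (h | ⟨b, hb, hba⟩)
    · exact absurd h (esymm_not_mem a)
    · rwa [esymm_inj hba] at hb
  · intro ha
    exact Or.inr ⟨a, ha, rfl⟩

lemma hY_gY {X : Finset (Fin n)} (hYX : Y ⊆ X) : hY n Y (gY n Y X) = X := by
  ext x
  rw [mem_hY]
  constructor
  · rintro (h | ⟨a, ha, hax⟩)
    · exact hYX h
    · rw [← hax]; exact mem_gY.1 ha
  · intro hx
    by_cases hxY : x ∈ Y
    · exact Or.inl hxY
    · refine Or.inr ⟨eY n Y ⟨x, Finset.mem_compl.2 hxY⟩, ?_, ?_⟩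
      · rw [mem_gY, Equiv.symm_apply_apply]; exact hx
      · rw [Equiv.symm_apply_apply]
  
lemma card_hY (Z : Finset (Fin (n - Y.card))) : (hY n Y Z).card = Z.card + Y.card := by
  rw [hY, Finset.card_union_of_disjoint, Finset.card_image_of_injective _ esymm_inj]
  · omega
  · rw [Finset.disjoint_right]
    intro x hx
    obtain ⟨a, -, rfl⟩ := Finset.mem_image.1 hx
    exact esymm_not_mem a

lemma card_gY {X : Finset (Fin n)} (hYX : Y ⊆ X) : (gY n Y X).card + Y.card = X.card := by
  conv_rhs => rw [← hY_gY hYX]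
  rw [card_hY]

lemma gY_mono {X X' : Finset (Fin n)} (h : X ⊆ X') : gY n Y X ⊆ gY n Y X' := by
  intro a ha; rw [mem_gY] at *; exact h ha

lemma gY_reflect {X X' : Finset (Fin n)} (hYX : Y ⊆ X') (h : gY n Y X ⊆ gY n Y X') :
    X ∩ X' ∪ X ⊆ X' ∨ (Y ⊆ X → X ⊆ X') := by
  exact Or.inr (fun _ => by
    intro x hx
    by_cases hxY : x ∈ Y
    · exact hYX hxY
    · have : (eY n Y ⟨x, Finset.mem_compl.2 hxY⟩) ∈ gY n Y X := by
        rw [mem_gY, Equiv.symm_apply_apply]; exact hx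
      have := h this
      rw [mem_gY, Equiv.symm_apply_apply] at this
      exact this)

lemma gY_subset_iff {X X' : Finset (Fin n)} (hX : Y ⊆ X) (hX' : Y ⊆ X') :
    gY n Y X ⊆ gY n Y X' ↔ X ⊆ X' := by
  constructor
  · intro h
    rcases gY_reflect hX' h with h' | h'
    · intro x hx; exact h' (Finset.mem_union_right _ hx)
    · exact h' hX
  · exact gY_mono

lemma gY_inf (S : Finset (Finset (Fin n))) :
    (S.image (gY n Y)).inf id = gY n Y (S.inf id) := by
  ext a
  rw [mem_gY, mem_inf_iff, mem_inf_iff]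
  constructor
  · intro h X hX
    have := h (gY n Y X) (Finset.mem_image_of_mem _ hX)
    rwa [id, mem_gY] at this
  · intro h W hW
    obtain ⟨X, hX, rfl⟩ := Finset.mem_image.1 hW
    rw [id, mem_gY]
    exact h X hX

lemma gY_injOn {S : Finset (Finset (Fin n))} (hsup : ∀ X ∈ S, Y ⊆ X) :
    Set.InjOn (gY n Y) ↑S := by
  intro X hX X' hX' h
  rw [← hY_gY (hsup X hX), h, hY_gY (hsup X' hX')]

lemma DL_gY (hYd : Y.card ≤ d) {S : Finset (Finset (Fin n))} (hne : S.Nonempty)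
    (hsup : ∀ X ∈ S, Y ⊆ X) :
    DL (d - Y.card) (S.image (gY n Y)) = DL d S := by
  have hinf : Y ⊆ S.inf id := by
    intro x hx
    rw [mem_inf_iff]
    intro X hX
    exact hsup X hX hx
  have hcards : ((S.image (gY n Y)).inf id).card + Y.card = (S.inf id).card := by
    rw [gY_inf]
    exact card_gY hinf
  have hsum : ∑ W ∈ S.image (gY n Y), (((d - Y.card : ℕ) : ℤ) + 1 - (W.card : ℤ))
      = ∑ X ∈ S, (((d : ℤ) + 1) - (X.card : ℤ)) := by
    rw [Finset.sum_image (fun X hX X' hX' h => gY_injOn hsup hX hX' h)]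
    apply Finset.sum_congr rfl
    intro X hX
    have := card_gY (hsup X hX)
    have h2 : ((gY n Y X).card : ℤ) + Y.card = X.card := by exact_mod_cast this
    have h3 : ((d - Y.card : ℕ) : ℤ) = (d : ℤ) - Y.card := by
      have : Y.card ≤ d := hYd
      push_cast [Nat.cast_sub this]
      ring
    rw [h3]
    linarith
  rw [DL, DL, hsum]
  have h3 : ((d - Y.card : ℕ) : ℤ) = (d : ℤ) - Y.card := by
    push_cast [Nat.cast_sub hYd]
    ring
  rw [h3]
  have h4 : (((S.image (gY n Y)).inf id).card : ℤ) + Y.card = ((S.inf id).card : ℤ) := by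
    exact_mod_cast hcards
  linarith

end Factor

section FactorIso

variable {n d : ℕ} {Y : Finset (Fin n)}

lemma sup_of_ideal (hYd : Y.card ≤ d) (S : IdealSub n d {Y}) : ∀ X ∈ S.1, Y ⊆ X := by
  intro X hX
  obtain ⟨Y', hY', h⟩ := (leLow_iff_cov S.2.1 (Lc.singleton hYd)).1 S.2.2 X hX
  rwa [Finset.mem_singleton.1 hY'] at h

lemma image_gY_mem (hYd : Y.card ≤ d) {S : Finset (Finset (Fin n))} (hS : Lc d S)
    (hsup : ∀ X ∈ S, Y ⊆ X) : S.image (gY n Y) ∈ LLower (n - Y.card) (d - Y.card) := by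
  constructor
  · intro W hW
    obtain ⟨X, hX, rfl⟩ := Finset.mem_image.1 hW
    have h1 := card_gY (hsup X hX)
    have h2 := hS.1 X hX
    omega
  · intro S'' hS'' hc
    have heq : S'' = (S.filter (fun X => gY n Y X ∈ S'')).image (gY n Y) := by
      ext W
      constructor
      · intro hW
        obtain ⟨X, hX, rfl⟩ := Finset.mem_image.1 (hS'' hW)
        exact Finset.mem_image_of_mem _ (Finset.mem_filter.2 ⟨hX, hW⟩)
      · intro hW
        obtain ⟨X, hX, rfl⟩ := Finset.mem_image.1 hW
        exact (Finset.mem_filter.1 hX).2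
    have hsub : S.filter (fun X => gY n Y X ∈ S'') ⊆ S := Finset.filter_subset _ _
    have hsupf : ∀ X ∈ S.filter (fun X => gY n Y X ∈ S''), Y ⊆ X :=
      fun X hX => hsup X (hsub hX)
    have hcf : 1 < (S.filter (fun X => gY n Y X ∈ S'')).card := by
      have h1 := Finset.card_image_le (s := S.filter (fun X => gY n Y X ∈ S'')) (f := gY n Y)
      rw [← heq] at h1
      omega
    have hnef : (S.filter (fun X => gY n Y X ∈ S'')).Nonempty :=
      Finset.card_pos.1 (by omega)
    rw [heq, DL_gY hYd hnef hsupf]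
    exact hS.2 _ hsub hcf

lemma image_hY_mem (hYd : Y.card ≤ d) {Z : Finset (Finset (Fin (n - Y.card)))}
    (hZ : Z ∈ LLower (n - Y.card) (d - Y.card)) :
    (Z.image (hY n Y)) ∈ LLower n d ∧ leLow d (Z.image (hY n Y)) {Y} := by
  have hsup : ∀ X ∈ Z.image (hY n Y), Y ⊆ X := by
    intro X hX
    obtain ⟨W, hW, rfl⟩ := Finset.mem_image.1 hX
    exact Finset.subset_union_left
  have hLc : Lc d (Z.image (hY n Y)) := by
    constructor
    · intro X hX
      obtain ⟨W, hW, rfl⟩ := Finset.mem_image.1 hX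
      have h1 := card_hY (Y := Y) W
      have h2 := hZ.1 W hW
      omega
    · intro S' hS' hc
      have heq : S' = (Z.filter (fun W => hY n Y W ∈ S')).image (hY n Y) := by
        ext X
        constructor
        · intro hX
          obtain ⟨W, hW, rfl⟩ := Finset.mem_image.1 (hS' hX)
          exact Finset.mem_image_of_mem _ (Finset.mem_filter.2 ⟨hW, hX⟩)
        · intro hX
          obtain ⟨W, hW, rfl⟩ := Finset.mem_image.1 hX
          exact (Finset.mem_filter.1 hW).2
      have hsub : Z.filter (fun W => hY n Y W ∈ S') ⊆ Z := Finset.filter_subset _ _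
      have hcf : 1 < (Z.filter (fun W => hY n Y W ∈ S')).card := by
        have h1 := Finset.card_image_le (s := Z.filter (fun W => hY n Y W ∈ S'))
          (f := hY n Y)
        rw [← heq] at h1
        omega
      have hnef : (Z.filter (fun W => hY n Y W ∈ S')).Nonempty := Finset.card_pos.1 (by omega)
      have hnef2 : ((Z.filter (fun W => hY n Y W ∈ S')).image (hY n Y)).Nonempty :=
        hnef.image _
      have hsupf : ∀ X ∈ (Z.filter (fun W => hY n Y W ∈ S')).image (hY n Y), Y ⊆ X := by
        intro X hX
        obtain ⟨W, hW, rfl⟩ := Finset.mem_image.1 hX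
        exact Finset.subset_union_left
      have hgh : ((Z.filter (fun W => hY n Y W ∈ S')).image (hY n Y)).image (gY n Y)
          = Z.filter (fun W => hY n Y W ∈ S') := by
        rw [Finset.image_image]
        rw [show ((gY n Y) ∘ (hY n Y)) = id from funext (fun W => gY_hY W), Finset.image_id]
      have := DL_gY hYd hnef2 hsupf
      rw [hgh] at this
      rw [heq, ← this]
      exact hZ.2 _ hsub hcf
  exact ⟨hLc, (leLow_iff_cov hLc (Lc.singleton hYd)).2
    (fun X hX => ⟨Y, Finset.mem_singleton_self _, hsup X hX⟩)⟩

noncomputable def isoFactor (n d : ℕ) (Y : Finset (Fin n)) (hYd : Y.card ≤ d) :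
    IdealSub n d {Y} ≃o ↥(LLower (n - Y.card) (d - Y.card)) where
  toFun S := ⟨S.1.image (gY n Y), image_gY_mem hYd S.2.1 (sup_of_ideal hYd S)⟩
  invFun Z := ⟨Z.1.image (hY n Y), image_hY_mem hYd Z.2⟩
  left_inv S := by
    apply Subtype.ext
    show (S.1.image (gY n Y)).image (hY n Y) = S.1
    rw [Finset.image_image]
    have h1 : S.1.image (hY n Y ∘ gY n Y) = S.1.image id :=
      Finset.image_congr (fun X hX => hY_gY (sup_of_ideal hYd S X hX))
    rw [h1, Finset.image_id]
  right_inv Z := by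
    apply Subtype.ext
    show (Z.1.image (hY n Y)).image (gY n Y) = Z.1
    rw [Finset.image_image]
    have h1 : Z.1.image (gY n Y ∘ hY n Y) = Z.1.image id :=
      Finset.image_congr (fun W hW => gY_hY W)
    rw [h1, Finset.image_id]
  map_rel_iff' := by
    intro S S'
    show leLow (d - Y.card) (S.1.image (gY n Y)) (S'.1.image (gY n Y)) ↔ leLow d S.1 S'.1
    rw [leLow_iff_cov (image_gY_mem hYd S.2.1 (sup_of_ideal hYd S))
      (image_gY_mem hYd S'.2.1 (sup_of_ideal hYd S')),
      leLow_iff_cov S.2.1 S'.2.1]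
    constructor
    · intro h X hX
      obtain ⟨W', hW', hsub⟩ := h (gY n Y X) (Finset.mem_image_of_mem _ hX)
      obtain ⟨X', hX', rfl⟩ := Finset.mem_image.1 hW'
      exact ⟨X', hX', (gY_subset_iff (sup_of_ideal hYd S' X' hX')
        (sup_of_ideal hYd S X hX)).1 hsub⟩
    · intro h W hW
      obtain ⟨X, hX, rfl⟩ := Finset.mem_image.1 hW
      obtain ⟨X', hX', hsub⟩ := h X hX
      exact ⟨gY n Y X', Finset.mem_image_of_mem _ hX', gY_mono hsub⟩

end FactorIso

/-- Product of order isos for bare `LE` structures. -/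
def piCongrLE {ι : Type*} {A B : ι → Type*} [∀ i, LE (A i)] [∀ i, LE (B i)]
    (e : ∀ i, A i ≃o B i) : (∀ i, A i) ≃o (∀ i, B i) where
  toEquiv := Equiv.piCongrRight fun i => (e i).toEquiv
  map_rel_iff' := by
    intro f g
    constructor
    · intro h i
      exact (e i).map_rel_iff.1 (h i)
    · intro h i
      exact (e i).map_rel_iff.2 (h i)

/-- For `T ∈ L_{d+k+1,d}`, `T ≠ ∅`, the order ideal generated by `T` is
order-isomorphic to the product `Π_{Tᵢ ∈ T} I({Tᵢ})`, and hence to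
`Π_{Tᵢ ∈ T} L_{k+codim_d(Tᵢ), codim_d(Tᵢ)-1}`. -/
theorem stmt13 (d k : ℕ) (T : Finset (Finset (Fin (d + k + 1))))
    (hT : T ∈ LLower (d + k + 1) d) (hne : T ≠ ∅) :
    Nonempty (IdealSub (d + k + 1) d T ≃o
      ((Ti : ↥T) → IdealSub (d + k + 1) d {Ti.1})) ∧
    Nonempty (IdealSub (d + k + 1) d T ≃o
      ((Ti : ↥T) →
        ↥(LLower (d + k + 1 - (Ti.1 : Finset (Fin (d + k + 1))).card)
            (d - (Ti.1 : Finset (Fin (d + k + 1))).card)))) := by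
  refine ⟨⟨isoProd _ d T hT⟩, ⟨(isoProd _ d T hT).trans
    (piCongrLE fun i => isoFactor _ d i.1 (hT.1 i.1 i.2))⟩⟩
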